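/- For every A ∈ Ω and rows 1 ≤ i < j ≤ m, the (i,j)-binomial neighborhood of A has cardinality |N_ij(A)| = C(u_ij(A) + l_ij(A), u_ij(A)), the binomial coefficient choosing u_ij(A) elements out of u_ij(A) + l_ij(A). -/

import Mathlib

open Finset

attribute [local instance] Classical.propDecidable

/-- A binary `m × n` matrix, with `true` representing a `1` entry. -/
abbrev BinMat (m n : ℕ) := Fin m → Fin n → Bool

/-- `A ∈ Ω(r,c,F)`: the binary matrix `A` has row sums `r`, column sums `c`, and is zero
on the forbidden entries `F`. -/
def inOmega {m n : ℕ} (r : Fin m → ℕ) (c : Fin n → ℕ) (F : Finset (Fin m × Fin n))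
    (A : BinMat m n) : Prop :=
  (∀ i : Fin m, (univ.filter fun k => A i k = true).card = r i) ∧
  (∀ k : Fin n, (univ.filter fun i => A i k = true).card = c k) ∧
  ∀ p ∈ F, A p.1 p.2 = false

/-- `U_ij(A)`: columns with a `1` in row `i`, a `0` in row `j`, and `(j,k)` not forbidden. -/
def Uset {m n : ℕ} (F : Finset (Fin m × Fin n)) (i j : Fin m) (A : BinMat m n) :
    Finset (Fin n) :=
  univ.filter fun k => A i k = true ∧ A j k = false ∧ (j, k) ∉ F

/-- `L_ij(A)`: columns with a `0` in row `i`, a `1` in row `j`, and `(i,k)` not forbidden. -/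
def Lset {m n : ℕ} (F : Finset (Fin m × Fin n)) (i j : Fin m) (A : BinMat m n) :
    Finset (Fin n) :=
  univ.filter fun k => A i k = false ∧ A j k = true ∧ (i, k) ∉ F

/-- `u_ij(A) = |U_ij(A)|`. -/
def usize {m n : ℕ} (F : Finset (Fin m × Fin n)) (i j : Fin m) (A : BinMat m n) : ℕ :=
  (Uset F i j A).card

/-- `l_ij(A) = |L_ij(A)|`. -/
def lsize {m n : ℕ} (F : Finset (Fin m × Fin n)) (i j : Fin m) (A : BinMat m n) : ℕ :=
  (Lset F i j A).card

/-- `B ∈ N_ij(A)`: `B ∈ Ω` and `B` agrees with `A` outside `{i,j} × (U_ij(A) ∪ L_ij(A))`. -/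
def inNbhd {m n : ℕ} (r : Fin m → ℕ) (c : Fin n → ℕ) (F : Finset (Fin m × Fin n))
    (i j : Fin m) (A B : BinMat m n) : Prop :=
  inOmega r c F B ∧
  ∀ k l, (k, l) ∉ (({i, j} : Finset (Fin m)) ×ˢ (Uset F i j A ∪ Lset F i j A)) →
    B k l = A k l

/-- for every `A ∈ Ω` and rows `i < j`, the `(i,j)`-binomial neighborhood of
`A` has cardinality `C(u_ij(A) + l_ij(A), u_ij(A))`. -/
private lemma card_split {α : Type*} [Fintype α] (T : Finset α) (p : α → Prop)
    [DecidablePred p] [DecidableEq α] :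
    (univ.filter p).card = (T.filter p).card + (Tᶜ.filter p).card := by
  rw [← Finset.card_union_of_disjoint
    (Finset.disjoint_filter_filter disjoint_compl_right),
    ← Finset.filter_union, Finset.union_compl]

private lemma card_filter_balance {α : Type*} [Fintype α] [DecidableEq α]
    (T : Finset α) (p q : α → Bool)
    (houter : ∀ x ∉ T, p x = q x)
    (h : (univ.filter fun x => p x = true).card = (univ.filter fun x => q x = true).card) :
    (T.filter fun x => p x = true).card = (T.filter fun x => q x = true).card := by
  have hcomp : (Tᶜ.filter fun x => p x = true) = (Tᶜ.filter fun x => q x = true) :=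
    Finset.filter_congr fun x hx => by rw [houter x (Finset.mem_compl.mp hx)]
  rw [card_split T (fun x => p x = true), card_split T (fun x => q x = true), hcomp] at h
  exact Nat.add_right_cancel h

/-- The matrix obtained from `A` by setting row `i` on `S` to the indicator of `T`
and row `j` on `S` to its complement. -/
private def gmat {m n : ℕ} (A : BinMat m n) (i j : Fin m) (S T : Finset (Fin n)) :
    BinMat m n := fun k l =>
  if k = i then (if l ∈ S then decide (l ∈ T) else A k l)
  else if k = j then (if l ∈ S then !decide (l ∈ T) else A k l)
  else A k l

private lemma gmat_i {m n : ℕ} (A : BinMat m n) (i j : Fin m) (S T : Finset (Fin n))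
    (l : Fin n) : gmat A i j S T i l = if l ∈ S then decide (l ∈ T) else A i l := by
  simp [gmat]

private lemma gmat_j {m n : ℕ} (A : BinMat m n) (i j : Fin m) (S T : Finset (Fin n))
    (l : Fin n) (h : j ≠ i) :
    gmat A i j S T j l = if l ∈ S then !decide (l ∈ T) else A j l := by
  simp [gmat, h]

private lemma gmat_other {m n : ℕ} (A : BinMat m n) (i j : Fin m) (S T : Finset (Fin n))
    (k : Fin m) (l : Fin n) (h1 : k ≠ i) (h2 : k ≠ j) :
    gmat A i j S T k l = A k l := by
  simp [gmat, h1, h2]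

theorem stmt_5 {m n : ℕ} (r : Fin m → ℕ) (c : Fin n → ℕ) (F : Finset (Fin m × Fin n))
    (i j : Fin m) (hij : i < j) (A : BinMat m n) (hA : inOmega r c F A) :
    (univ.filter fun B : BinMat m n => inNbhd r c F i j A B).card
      = (usize F i j A + lsize F i j A).choose (usize F i j A) := by
  classical
  obtain ⟨hr, hc, hF⟩ := hA
  have hne : i ≠ j := ne_of_lt hij
  set U : Finset (Fin n) := Uset F i j A with hUdef
  set L : Finset (Fin n) := Lset F i j A with hLdef
  set S : Finset (Fin n) := U ∪ L with hSdef
  have hUmem : ∀ k, k ∈ U ↔ A i k = true ∧ A j k = false ∧ (j, k) ∉ F := by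
    intro k; simp [hUdef, Uset]
  have hLmem : ∀ k, k ∈ L ↔ A i k = false ∧ A j k = true ∧ (i, k) ∉ F := by
    intro k; simp [hLdef, Lset]
  have hdisj : Disjoint U L := by
    rw [Finset.disjoint_left]
    intro k hk hk'
    rw [hUmem] at hk; rw [hLmem] at hk'
    rw [hk.1] at hk'; exact Bool.noConfusion hk'.1
  have hScard : S.card = usize F i j A + lsize F i j A := by
    rw [hSdef, Finset.card_union_of_disjoint hdisj]; rfl
  -- not in the product set
  have hnm : ∀ (k : Fin m) (l : Fin n), (k ∉ ({i, j} : Finset (Fin m)) ∨ l ∉ S) →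
      (k, l) ∉ (({i, j} : Finset (Fin m)) ×ˢ (Uset F i j A ∪ Lset F i j A)) := by
    intro k l h hmem
    rw [Finset.mem_product] at hmem
    rcases h with h | h
    · exact h hmem.1
    · apply h; rw [hSdef, hUdef, hLdef]; exact hmem.2
  have hmemij : ∀ k : Fin m, k ∉ ({i, j} : Finset (Fin m)) → k ≠ i ∧ k ≠ j := by
    intro k hk
    simp only [Finset.mem_insert, Finset.mem_singleton, not_or] at hk
    exact hk
  have hmemij' : ∀ k : Fin m, k ≠ i → k ≠ j → k ∉ ({i, j} : Finset (Fin m)) := by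
    intro k h1 h2
    simp only [Finset.mem_insert, Finset.mem_singleton, not_or]
    exact ⟨h1, h2⟩
  -- no forbidden entries in rows i,j over S
  have hiF : ∀ k ∈ S, (i, k) ∉ F := by
    intro k hk
    rcases Finset.mem_union.mp hk with h | h
    · intro hin
      have := hF (i, k) hin
      rw [((hUmem k).mp h).1] at this; exact Bool.noConfusion this
    · exact ((hLmem k).mp h).2.2
  have hjF : ∀ k ∈ S, (j, k) ∉ F := by
    intro k hk
    rcases Finset.mem_union.mp hk with h | h
    · exact ((hUmem k).mp h).2.2
    · intro hin
      have := hF (j, k) hin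
      rw [((hLmem k).mp h).2.1] at this; exact Bool.noConfusion this
  -- A's ones in S within rows i and j
  have hfilU : (S.filter fun k => A i k = true) = U := by
    ext k
    simp only [Finset.mem_filter, Finset.mem_union, hSdef]
    constructor
    · rintro ⟨h1 | h1, h2⟩
      · exact h1
      · rw [((hLmem k).mp h1).1] at h2; exact Bool.noConfusion h2
    · intro h; exact ⟨Or.inl h, ((hUmem k).mp h).1⟩
  have hfilL : (S.filter fun k => A j k = true) = L := by
    ext k
    simp only [Finset.mem_filter, Finset.mem_union, hSdef]
    constructor
    · rintro ⟨h1 | h1, h2⟩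
      · rw [((hUmem k).mp h1).2.1] at h2; exact Bool.noConfusion h2
      · exact h1
    · intro h; exact ⟨Or.inr h, ((hLmem k).mp h).2.1⟩
  -- exactly one of A i l, A j l in column l ∈ S
  have hAone : ∀ l ∈ S, (({i, j} : Finset (Fin m)).filter fun k => A k l = true).card = 1 := by
    intro l hl
    rcases Finset.mem_union.mp hl with h | h
    · obtain ⟨h1, h2, -⟩ := (hUmem l).mp h
      have : (({i, j} : Finset (Fin m)).filter fun k => A k l = true) = {i} := by
        ext k
        simp only [Finset.mem_filter, Finset.mem_insert, Finset.mem_singleton]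
        constructor
        · rintro ⟨rfl | rfl, hk⟩
          · rfl
          · rw [h2] at hk; exact Bool.noConfusion hk
        · rintro rfl; exact ⟨Or.inl rfl, h1⟩
      rw [this]; rfl
    · obtain ⟨h1, h2, -⟩ := (hLmem l).mp h
      have : (({i, j} : Finset (Fin m)).filter fun k => A k l = true) = {j} := by
        ext k
        simp only [Finset.mem_filter, Finset.mem_insert, Finset.mem_singleton]
        constructor
        · rintro ⟨rfl | rfl, hk⟩
          · rw [h1] at hk; exact Bool.noConfusion hk
          · rfl
        · rintro rfl; exact ⟨Or.inr rfl, h2⟩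
      rw [this]; rfl
  rw [← hScard, ← Finset.card_powersetCard (usize F i j A) S]
  apply Finset.card_nbij' (fun B => S.filter fun l => B i l = true)
    (fun T => gmat A i j S T)
  -- maps into powersetCard
  · intro B hB
    obtain ⟨⟨hBr, hBc, hBF⟩, hBag⟩ := (Finset.mem_filter.mp hB).2
    simp only [Finset.mem_coe, Finset.mem_powersetCard]
    refine ⟨Finset.filter_subset _ _, ?_⟩
    have := card_filter_balance S (fun l => B i l) (fun l => A i l)
      (fun l hl => hBag i l (hnm i l (Or.inr hl)))
      (by rw [hBr i, hr i])
    rw [this, hfilU]; rfl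
  -- g T is in the neighborhood
  · intro T hT
    rw [Finset.mem_coe, Finset.mem_powersetCard] at hT
    obtain ⟨hTS, hTc⟩ := hT
    have hgag : ∀ (k : Fin m) (l : Fin n),
        (k, l) ∉ (({i, j} : Finset (Fin m)) ×ˢ (Uset F i j A ∪ Lset F i j A)) →
        gmat A i j S T k l = A k l := by
      intro k l hkl
      by_cases hki : k = i
      · subst hki
        have hl : l ∉ S := by
          intro hl
          exact hkl (Finset.mem_product.mpr ⟨Finset.mem_insert_self _ _,
            by rw [← hUdef, ← hLdef, ← hSdef]; exact hl⟩)
        rw [gmat_i, if_neg hl]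
      by_cases hkj : k = j
      · subst hkj
        have hl : l ∉ S := by
          intro hl
          exact hkl (Finset.mem_product.mpr
            ⟨Finset.mem_insert_of_mem (Finset.mem_singleton_self _),
            by rw [← hUdef, ← hLdef, ← hSdef]; exact hl⟩)
        rw [gmat_j _ _ _ _ _ _ (Ne.symm hne), if_neg hl]
      · exact gmat_other _ _ _ _ _ _ _ hki hkj
    simp only [Finset.mem_coe]; rw [Finset.mem_filter]
    refine ⟨Finset.mem_univ _, ⟨⟨?_, ?_, ?_⟩, hgag⟩⟩
    · -- row sums
      intro k
      by_cases hki : k = i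
      · rw [hki]
        rw [card_split S (fun l => gmat A i j S T i l = true)]
        have h1 : (S.filter fun l => gmat A i j S T i l = true) = T := by
          ext l
          simp only [Finset.mem_filter, gmat_i]
          constructor
          · rintro ⟨hl, h2⟩
            rw [if_pos hl] at h2; exact of_decide_eq_true h2
          · intro hl
            exact ⟨hTS hl, by rw [if_pos (hTS hl)]; exact decide_eq_true hl⟩
        have h2 : (Sᶜ.filter fun l => gmat A i j S T i l = true)
            = (Sᶜ.filter fun l => A i l = true) :=
          Finset.filter_congr fun l hl => by
            rw [gmat_i, if_neg (Finset.mem_compl.mp hl)]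
        rw [h1, h2, hTc, ← hr i, card_split S (fun l => A i l = true), hfilU]
        rfl
      by_cases hkj : k = j
      · rw [hkj]
        rw [card_split S (fun l => gmat A i j S T j l = true)]
        have h1 : (S.filter fun l => gmat A i j S T j l = true) = S \ T := by
          ext l
          simp only [Finset.mem_filter, Finset.mem_sdiff, gmat_j _ _ _ _ _ _ (Ne.symm hne)]
          constructor
          · rintro ⟨hl, h2⟩
            rw [if_pos hl] at h2
            refine ⟨hl, fun hlT => ?_⟩
            rw [decide_eq_true hlT] at h2; exact Bool.noConfusion h2
          · rintro ⟨hl, hlT⟩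
            refine ⟨hl, ?_⟩
            rw [if_pos hl, decide_eq_false hlT]; rfl
        have h2 : (Sᶜ.filter fun l => gmat A i j S T j l = true)
            = (Sᶜ.filter fun l => A j l = true) :=
          Finset.filter_congr fun l hl => by
            rw [gmat_j _ _ _ _ _ _ (Ne.symm hne), if_neg (Finset.mem_compl.mp hl)]
        have hsd : (S \ T).card = lsize F i j A := by
          rw [Finset.card_sdiff_of_subset hTS, hScard, hTc]
          simp [usize]
        rw [h1, h2, hsd, ← hr j, card_split S (fun l => A j l = true), hfilL]
        rfl
      · have heq : ∀ l, gmat A i j S T k l = A k l := fun l =>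
          gmat_other _ _ _ _ _ _ _ hki hkj
        simp only [heq]; exact hr k
    · -- column sums
      intro l
      by_cases hl : l ∈ S
      · rw [card_split ({i, j} : Finset (Fin m)) (fun k => gmat A i j S T k l = true),
          ← hc l, card_split ({i, j} : Finset (Fin m)) (fun k => A k l = true)]
        have h2 : (({i, j} : Finset (Fin m))ᶜ.filter fun k => gmat A i j S T k l = true)
            = (({i, j} : Finset (Fin m))ᶜ.filter fun k => A k l = true) :=
          Finset.filter_congr fun k hk => by
            obtain ⟨h1, h2⟩ := hmemij k (Finset.mem_compl.mp hk)
            rw [gmat_other _ _ _ _ _ _ _ h1 h2]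
        have h1 : (({i, j} : Finset (Fin m)).filter
            fun k => gmat A i j S T k l = true).card = 1 := by
          by_cases hlT : l ∈ T
          · have : (({i, j} : Finset (Fin m)).filter
                fun k => gmat A i j S T k l = true) = {i} := by
              ext k
              simp only [Finset.mem_filter, Finset.mem_insert, Finset.mem_singleton]
              constructor
              · rintro ⟨rfl | rfl, hk⟩
                · rfl
                · rw [gmat_j _ _ _ _ _ _ (Ne.symm hne), if_pos hl,
                    decide_eq_true hlT] at hk
                  exact Bool.noConfusion hk
              · rintro rfl
                refine ⟨Or.inl rfl, ?_⟩
                rw [gmat_i, if_pos hl]; exact decide_eq_true hlT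
            rw [this]; rfl
          · have : (({i, j} : Finset (Fin m)).filter
                fun k => gmat A i j S T k l = true) = {j} := by
              ext k
              simp only [Finset.mem_filter, Finset.mem_insert, Finset.mem_singleton]
              constructor
              · rintro ⟨rfl | rfl, hk⟩
                · rw [gmat_i, if_pos hl, decide_eq_false hlT] at hk
                  exact Bool.noConfusion hk
                · rfl
              · rintro rfl
                refine ⟨Or.inr rfl, ?_⟩
                rw [gmat_j _ _ _ _ _ _ (Ne.symm hne), if_pos hl, decide_eq_false hlT]
                rfl
            rw [this]; rfl
        rw [h1, h2, hAone l hl]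
      · have heq : ∀ k, gmat A i j S T k l = A k l := by
          intro k
          by_cases hki : k = i
          · subst hki; rw [gmat_i, if_neg hl]
          by_cases hkj : k = j
          · subst hkj; rw [gmat_j _ _ _ _ _ _ (Ne.symm hne), if_neg hl]
          · exact gmat_other _ _ _ _ _ _ _ hki hkj
        simp only [heq]; exact hc l
    · -- forbidden
      intro p hp
      have hpS : gmat A i j S T p.1 p.2 = A p.1 p.2 := by
        apply hgag
        apply hnm
        by_cases h1 : p.1 = i
        · right; intro hS; exact hiF p.2 hS (by rw [← h1]; exact hp)
        by_cases h2 : p.1 = j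
        · right; intro hS; exact hjF p.2 hS (by rw [← h2]; exact hp)
        · exact Or.inl (hmemij' p.1 h1 h2)
      rw [hpS]; exact hF p hp
  -- left inverse: g (fwd B) = B
  · intro B hB
    obtain ⟨⟨hBr, hBc, hBF⟩, hBag⟩ := (Finset.mem_filter.mp hB).2
    have hkey : ∀ l ∈ S, B j l = !(B i l) := by
      intro l hl
      have hcol := card_filter_balance ({i, j} : Finset (Fin m))
        (fun k => B k l) (fun k => A k l)
        (fun k hk => hBag k l (hnm k l (Or.inl hk)))
        (by rw [hBc l, hc l])
      rw [hAone l hl] at hcol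
      cases hBi : B i l <;> cases hBj : B j l
      · exfalso
        have : (({i, j} : Finset (Fin m)).filter fun k => B k l = true) = ∅ := by
          apply Finset.filter_false_of_mem
          intro k hk
          rcases Finset.mem_insert.mp hk with rfl | hk
          · simp [hBi]
          · rw [Finset.mem_singleton.mp hk]; simp [hBj]
        rw [this] at hcol; simp at hcol
      · rfl
      · rfl
      · exfalso
        have : (({i, j} : Finset (Fin m)).filter fun k => B k l = true)
            = ({i, j} : Finset (Fin m)) := by
          apply Finset.filter_true_of_mem
          intro k hk
          rcases Finset.mem_insert.mp hk with rfl | hk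
          · exact hBi
          · rw [Finset.mem_singleton.mp hk]; exact hBj
        rw [this, Finset.card_insert_of_notMem (by simpa using hne),
          Finset.card_singleton] at hcol
        omega
    beta_reduce
    funext k l
    by_cases hki : k = i
    · subst hki
      by_cases hl : l ∈ S
      · rw [gmat_i, if_pos hl]
        cases hB2 : B k l
        · simp [Finset.mem_filter, hB2]
        · simp [Finset.mem_filter, hl, hB2]
      · rw [gmat_i, if_neg hl]
        exact (hBag k l (hnm k l (Or.inr hl))).symm
    by_cases hkj : k = j
    · subst hkj
      by_cases hl : l ∈ S
      · rw [gmat_j _ _ _ _ _ _ (Ne.symm hne), if_pos hl, hkey l hl]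
        cases hB2 : B i l
        · simp [Finset.mem_filter, hB2]
        · simp [Finset.mem_filter, hl, hB2]
      · rw [gmat_j _ _ _ _ _ _ (Ne.symm hne), if_neg hl]
        exact (hBag k l (hnm k l (Or.inr hl))).symm
    · rw [gmat_other _ _ _ _ _ _ _ hki hkj]
      exact (hBag k l (hnm k l (Or.inl (hmemij' k hki hkj)))).symm
  -- right inverse: fwd (g T) = T
  · intro T hT
    rw [Finset.mem_coe, Finset.mem_powersetCard] at hT
    obtain ⟨hTS, hTc⟩ := hT
    beta_reduce
    ext l
    simp only [Finset.mem_filter, gmat_i]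
    constructor
    · rintro ⟨hl, h2⟩
      rw [if_pos hl] at h2; exact of_decide_eq_true h2
    · intro hl
      exact ⟨hTS hl, by rw [if_pos (hTS hl)]; exact decide_eq_true hl⟩
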